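/- For any join tree (T,χ) and any polymatroid H, J(T) ≥ 0. -/

import Mathlib

open Finset

/-- For any join tree (nodes `0,…,m−1`, root `0`, parents appearing
earlier, bags `χ` satisfying the running intersection property) and any polymatroid `H`,
`J(T) := Σ_v H(χ(v)) − Σ_{edges} H(χ(u)∩χ(v)) − H(∪_v χ(v)) ≥ 0`. -/
theorem joinTree_J_nonneg {α : Type*} [DecidableEq α]
    (H : Finset α → ℝ)
    (h0 : H ∅ = 0)
    (hmono : ∀ A B : Finset α, A ⊆ B → H A ≤ H B)
    (hsub : ∀ A B : Finset α, H (A ∪ B) + H (A ∩ B) ≤ H A + H B)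
    (m : ℕ) (hm : 1 ≤ m)
    (χ : ℕ → Finset α) (par : ℕ → ℕ)
    (hpar : ∀ i, 1 ≤ i → i < m → par i < i)
    (hRIP : ∀ (a : α) (i : ℕ), 1 ≤ i → i < m → a ∈ χ i →
      (∃ j < i, a ∈ χ j) → a ∈ χ (par i)) :
    0 ≤ (∑ i ∈ range m, H (χ i)) - (∑ i ∈ Ico 1 m, H (χ (par i) ∩ χ i)) -
        H ((range m).biUnion χ) := by
  have key : ∀ k, 1 ≤ k → k ≤ m →
      H ((range k).biUnion χ) ≤
        (∑ i ∈ range k, H (χ i)) - ∑ i ∈ Ico 1 k, H (χ (par i) ∩ χ i) := by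
    intro k hk1
    induction k, hk1 using Nat.le_induction with
    | base =>
      intro _
      simp
    | succ k hk ih =>
      intro hkm
      have ihk := ih (le_of_lt hkm)
      have hkm' : k < m := hkm
      have hcap : (range k).biUnion χ ∩ χ k = χ (par k) ∩ χ k := by
        ext a
        simp only [mem_inter, mem_biUnion, mem_range]
        constructor
        · rintro ⟨⟨j, hj, haj⟩, hak⟩
          exact ⟨hRIP a k hk hkm' hak ⟨j, hj, haj⟩, hak⟩
        · rintro ⟨hap, hak⟩
          exact ⟨⟨par k, hpar k hk hkm', hap⟩, hak⟩
      have hsubm := hsub ((range k).biUnion χ) (χ k)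
      rw [hcap] at hsubm
      have hU : (range (k+1)).biUnion χ = (range k).biUnion χ ∪ χ k := by
        rw [range_add_one, biUnion_insert, union_comm]
      rw [hU, Finset.sum_range_succ, Finset.sum_Ico_succ_top hk]
      linarith
  have hfin := key m hm le_rfl
  linarith
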